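/- (Main Proposition) The function f* : [0,1]² → [0,1] defined by f*(x,y) = f(x,y) if (x,y) ∈ ⋃_{n∈ℕ} A_n, and f*(x,y) = x otherwise, is a bijection from [0,1]² to [0,1]. -/

import Mathlib

open Set

/-- The `k`-th digit of the proper decimal expansion of `x`
(meaningful for `x ∈ [0,1)` and `k ≥ 1`): `d_k(x) = ⌊10^k x⌋ - 10⌊10^{k-1} x⌋`. -/
noncomputable def digit (k : ℕ) (x : ℝ) : ℤ :=
  ⌊(10 : ℝ) ^ k * x⌋ - 10 * ⌊(10 : ℝ) ^ (k - 1) * x⌋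

namespace CantorAux

lemma digit_succ (k : ℕ) (x : ℝ) :
    digit (k+1) x = ⌊(10:ℝ)^(k+1) * x⌋ - 10 * ⌊(10:ℝ)^k * x⌋ := by
  simp [digit]

lemma digit_bounds (k : ℕ) (x : ℝ) : 0 ≤ digit (k+1) x ∧ digit (k+1) x ≤ 9 := by
  rw [digit_succ]
  set a : ℝ := (10:ℝ)^k * x with ha
  have h10 : (10:ℝ)^(k+1) * x = 10 * a := by ring
  rw [h10]
  have key : ⌊(10:ℝ) * a⌋ - 10 * ⌊a⌋ = ⌊10 * Int.fract a⌋ := by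
    have : (10:ℝ) * Int.fract a = 10 * a - (10 * ⌊a⌋ : ℤ) := by
      rw [Int.fract]; push_cast; ring
    rw [this, Int.floor_sub_intCast]
  rw [key]
  constructor
  · exact Int.floor_nonneg.mpr (mul_nonneg (by norm_num) (Int.fract_nonneg a))
  · have h1 : (10:ℝ) * Int.fract a < 10 := by
      have := Int.fract_lt_one a; linarith
    have := Int.floor_le_floor (R := ℝ) (le_of_lt h1)
    have h2 : ⌊(10:ℝ) * Int.fract a⌋ < 10 := by
      rw [Int.floor_lt]; exact_mod_cast h1
    omega

lemma digit_succ_nonneg (k : ℕ) (x : ℝ) : 0 ≤ digit (k+1) x := (digit_bounds k x).1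
lemma digit_succ_le (k : ℕ) (x : ℝ) : digit (k+1) x ≤ 9 := (digit_bounds k x).2

/-- Summability of digit-like series. -/
lemma summable_aux (c : ℕ → ℤ) (h0 : ∀ k, 0 ≤ c k) (h9 : ∀ k, c k ≤ 9)
    (e : ℕ → ℕ) (he : ∀ k, k ≤ e k) :
    Summable (fun k => (c k : ℝ) / 10 ^ (e k)) := by
  have S9 : Summable (fun k : ℕ => (9:ℝ) * (1/10)^k) :=
    (summable_geometric_of_lt_one (by norm_num) (by norm_num)).mul_left 9
  apply Summable.of_nonneg_of_le (fun k => ?_) (fun k => ?_) S9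
  · have := h0 k
    positivity
  · have h1 : (c k : ℝ) / 10 ^ (e k) ≤ 9 / 10 ^ (e k) := by
      gcongr
      exact_mod_cast h9 k
    have h2 : (9:ℝ) / 10 ^ (e k) ≤ 9 / 10 ^ k := by
      gcongr
      · norm_num
      · exact he k
    calc (c k : ℝ) / 10 ^ (e k) ≤ 9 / 10 ^ k := h1.trans h2
      _ = 9 * (1/10)^k := by rw [one_div, inv_pow]; ring

lemma nine_tail (n : ℕ) : ∑' k : ℕ, (9:ℝ)/10^(k+n+1) = 1/10^n := by
  have h : ∀ k : ℕ, (9:ℝ)/10^(k+n+1) = (9/10^(n+1)) * (1/10)^k := by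
    intro k
    rw [show k+n+1 = k+(n+1) by omega, pow_add, one_div, inv_pow]
    field_simp
  rw [tsum_congr h, tsum_mul_left, tsum_geometric_of_lt_one (by norm_num) (by norm_num)]
  rw [pow_succ]
  rw [eq_comm, inv_eq_one_div]
  field_simp
  ring

end CantorAux

namespace CantorAux

/-- A "good" digit sequence: digits in `[0,9]`, not eventually all `9`. -/
structure Good (c : ℕ → ℤ) : Prop where
  nonneg : ∀ k, 0 ≤ c k
  le9 : ∀ k, c k ≤ 9
  not9 : ∀ n, ∃ k, n ≤ k ∧ c k < 9

/-- The real number with digit sequence `c`. -/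
noncomputable def val (c : ℕ → ℤ) : ℝ := ∑' k : ℕ, (c k : ℝ) / 10 ^ (k + 1)

lemma summable_val {c : ℕ → ℤ} (h0 : ∀ k, 0 ≤ c k) (h9 : ∀ k, c k ≤ 9) :
    Summable (fun k => (c k : ℝ) / 10 ^ (k + 1)) :=
  summable_aux c h0 h9 (fun k => k + 1) (fun k => Nat.le_succ k)

lemma summable_tail {c : ℕ → ℤ} (h0 : ∀ k, 0 ≤ c k) (h9 : ∀ k, c k ≤ 9) (n : ℕ) :
    Summable (fun k => (c (k + n) : ℝ) / 10 ^ (k + n + 1)) :=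
  summable_aux (fun k => c (k + n)) (fun k => h0 _) (fun k => h9 _)
    (fun k => k + n + 1) (fun k => by show k ≤ k + n + 1; omega)

lemma summable_nine (n : ℕ) : Summable (fun k : ℕ => (9:ℝ) / 10 ^ (k + n + 1)) :=
  summable_aux (fun _ => 9) (fun _ => by norm_num) (fun _ => le_refl _)
    (fun k => k + n + 1) (fun k => by show k ≤ k + n + 1; omega)

lemma tail_nonneg {c : ℕ → ℤ} (h0 : ∀ k, 0 ≤ c k) (n : ℕ) :
    0 ≤ ∑' k : ℕ, (c (k + n) : ℝ) / 10 ^ (k + n + 1) := by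
  apply tsum_nonneg
  intro k
  have := h0 (k + n)
  positivity

lemma tail_lt (c : ℕ → ℤ) (hc : Good c) (n : ℕ) :
    ∑' k : ℕ, (c (k + n) : ℝ) / 10 ^ (k + n + 1) < 1 / 10 ^ n := by
  rw [← nine_tail n]
  obtain ⟨k₀, hk₀n, hk₀⟩ := hc.not9 n
  apply Summable.tsum_lt_tsum (i := k₀ - n)
  · intro k
    dsimp only
    gcongr
    exact_mod_cast hc.le9 _
  · have h : k₀ - n + n = k₀ := Nat.sub_add_cancel hk₀n
    rw [h]
    gcongr
    exact_mod_cast hk₀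
  · exact summable_tail hc.nonneg hc.le9 n
  · exact summable_nine n

lemma val_split (c : ℕ → ℤ) (hc : Good c) (n : ℕ) :
    val c = (∑ k ∈ Finset.range n, (c k : ℝ) / 10 ^ (k + 1)) +
      ∑' k : ℕ, (c (k + n) : ℝ) / 10 ^ (k + n + 1) := by
  rw [val, ← Summable.sum_add_tsum_nat_add n (summable_val hc.nonneg hc.le9)]

lemma head_int (c : ℕ → ℤ) (n : ℕ) :
    ∃ m : ℤ, (m : ℝ) = 10 ^ n * ∑ k ∈ Finset.range n, (c k : ℝ) / 10 ^ (k + 1) := by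
  induction n with
  | zero => exact ⟨0, by simp⟩
  | succ n ih =>
    obtain ⟨m, hm⟩ := ih
    refine ⟨10 * m + c n, ?_⟩
    rw [Finset.sum_range_succ, mul_add, pow_succ]
    push_cast
    have e : (10:ℝ)^n * 10 * ((c n : ℝ) / (10^n * 10)) = (c n : ℝ) := by
      field_simp
    rw [e]
    linear_combination 10 * hm

lemma floor_pow_val (c : ℕ → ℤ) (hc : Good c) (n : ℕ) :
    (⌊(10:ℝ) ^ n * val c⌋ : ℝ) = 10 ^ n * ∑ k ∈ Finset.range n, (c k : ℝ) / 10 ^ (k + 1) := by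
  obtain ⟨m, hm⟩ := head_int c n
  rw [← hm]
  congr 1
  rw [Int.floor_eq_iff]
  have hsplit := val_split c hc n
  have ht0 := tail_nonneg hc.nonneg n
  have ht1 := tail_lt c hc n
  set t := ∑' k : ℕ, (c (k + n) : ℝ) / 10 ^ (k + n + 1)
  have hval : (10:ℝ)^n * val c = (m : ℝ) + 10^n * t := by
    rw [hsplit, mul_add, hm]
  have hpow : (0:ℝ) < 10 ^ n := by positivity
  constructor
  · rw [hval]; nlinarith
  · rw [hval]
    have : (10:ℝ)^n * t < 1 := by
      rw [mul_comm]
      exact (lt_div_iff₀ hpow).mp (by simpa [div_eq_mul_inv] using ht1)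
    linarith

lemma digit_val (c : ℕ → ℤ) (hc : Good c) (k : ℕ) : digit (k + 1) (val c) = c k := by
  have h1 := floor_pow_val c hc (k + 1)
  have h2 := floor_pow_val c hc k
  rw [digit_succ]
  have : ((⌊(10:ℝ)^(k+1) * val c⌋ - 10 * ⌊(10:ℝ)^k * val c⌋ : ℤ) : ℝ) = (c k : ℝ) := by
    push_cast
    rw [h1, h2, Finset.sum_range_succ, mul_add, pow_succ]
    have e : (10:ℝ)^k * 10 * ((c k : ℝ) / (10^k * 10)) = (c k : ℝ) := by
      field_simp
    rw [e]
    ring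
  exact_mod_cast this

lemma val_nonneg {c : ℕ → ℤ} (h0 : ∀ k, 0 ≤ c k) : 0 ≤ val c := by
  apply tsum_nonneg
  intro k
  have := h0 k
  positivity

lemma val_lt_one (c : ℕ → ℤ) (hc : Good c) : val c < 1 := by
  have h := val_split c hc 0
  have := tail_lt c hc 0
  simp only [Finset.range_zero, Finset.sum_empty, zero_add] at h
  rw [h]
  simpa using this

end CantorAux

namespace CantorAux

/-- digit sequence of `x`. -/
noncomputable def dig1 (x : ℝ) : ℕ → ℤ := fun k => digit (k + 1) x

lemma dig1_nonneg (x : ℝ) (k : ℕ) : 0 ≤ dig1 x k := digit_succ_nonneg k x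
lemma dig1_le9 (x : ℝ) (k : ℕ) : dig1 x k ≤ 9 := digit_succ_le k x

lemma head_eq_floor {x : ℝ} (hx0 : 0 ≤ x) (hx1 : x < 1) (n : ℕ) :
    ∑ k ∈ Finset.range n, (dig1 x k : ℝ) / 10 ^ (k + 1) = (⌊(10:ℝ) ^ n * x⌋ : ℝ) / 10 ^ n := by
  induction n with
  | zero =>
    simp [Int.floor_eq_zero_iff.mpr ⟨hx0, hx1⟩]
  | succ n ih =>
    rw [Finset.sum_range_succ, ih, dig1, digit_succ]
    have h10 : ((10:ℝ)^(n+1)) ≠ 0 := by positivity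
    have h10' : ((10:ℝ)^n) ≠ 0 := by positivity
    push_cast
    rw [pow_succ]
    field_simp
    ring

lemma hasSum_dig1 {x : ℝ} (hx0 : 0 ≤ x) (hx1 : x < 1) :
    HasSum (fun k => (dig1 x k : ℝ) / 10 ^ (k + 1)) x := by
  have S : Summable (fun k => (dig1 x k : ℝ) / 10 ^ (k + 1)) :=
    summable_val (dig1_nonneg x) (dig1_le9 x)
  have hts : Filter.Tendsto (fun n => ∑ k ∈ Finset.range n, (dig1 x k : ℝ) / 10 ^ (k + 1))
      Filter.atTop (nhds (∑' k, (dig1 x k : ℝ) / 10 ^ (k + 1))) :=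
    S.hasSum.tendsto_sum_nat
  have htx : Filter.Tendsto (fun n => ∑ k ∈ Finset.range n, (dig1 x k : ℝ) / 10 ^ (k + 1))
      Filter.atTop (nhds x) := by
    have hlow : Filter.Tendsto (fun n : ℕ => x - (1/10:ℝ)^n) Filter.atTop (nhds x) := by
      have := (tendsto_pow_atTop_nhds_zero_of_lt_one (by norm_num : (0:ℝ) ≤ 1/10)
        (by norm_num : (1/10:ℝ) < 1)).const_sub x
      simpa using this
    have hlb : ∀ n : ℕ, x - (1/10:ℝ)^n ≤ ∑ k ∈ Finset.range n, (dig1 x k : ℝ) / 10 ^ (k + 1) := by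
      intro n
      rw [head_eq_floor hx0 hx1 n]
      have hp : (0:ℝ) < 10 ^ n := by positivity
      have hf : (10:ℝ)^n * x - 1 ≤ (⌊(10:ℝ)^n * x⌋ : ℝ) := by
        have := Int.lt_floor_add_one ((10:ℝ)^n * x)
        linarith
      have h1 : ((1:ℝ)/10)^n = 1/10^n := by
        rw [div_pow]; norm_num
      rw [sub_le_iff_le_add, h1, ← add_div, le_div_iff₀ hp]
      nlinarith [hf]
    have hub : ∀ n : ℕ, ∑ k ∈ Finset.range n, (dig1 x k : ℝ) / 10 ^ (k + 1) ≤ x := by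
      intro n
      rw [head_eq_floor hx0 hx1 n]
      have hp : (0:ℝ) < 10 ^ n := by positivity
      rw [div_le_iff₀ hp]
      have := Int.floor_le ((10:ℝ)^n * x)
      linarith
    exact tendsto_of_tendsto_of_tendsto_of_le_of_le hlow tendsto_const_nhds hlb hub
  exact (Summable.hasSum_iff S).mpr (tendsto_nhds_unique hts htx)

lemma val_dig1 {x : ℝ} (hx0 : 0 ≤ x) (hx1 : x < 1) : val (dig1 x) = x :=
  (hasSum_dig1 hx0 hx1).tsum_eq

lemma dig1_not9 {x : ℝ} (hx0 : 0 ≤ x) (hx1 : x < 1) (n : ℕ) :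
    ∃ k, n ≤ k ∧ dig1 x k < 9 := by
  by_contra h
  push_neg at h
  have h9 : ∀ k : ℕ, (dig1 x (k + n) : ℝ) = 9 := by
    intro k
    have h1 := h (k + n) (by omega)
    have h2 := dig1_le9 x (k + n)
    have : dig1 x (k + n) = 9 := le_antisymm h2 h1
    exact_mod_cast this
  have hx := (hasSum_dig1 hx0 hx1).tsum_eq
  have S : Summable (fun k => (dig1 x k : ℝ) / 10 ^ (k + 1)) :=
    summable_val (dig1_nonneg x) (dig1_le9 x)
  have hsplit := (Summable.sum_add_tsum_nat_add n S).symm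
  have htail : ∑' k : ℕ, (dig1 x (k + n) : ℝ) / 10 ^ (k + n + 1) = 1 / 10 ^ n := by
    rw [← nine_tail n]
    apply tsum_congr
    intro k
    rw [h9 k]
  rw [hx, head_eq_floor hx0 hx1 n, htail] at hsplit
  have hlt := Int.lt_floor_add_one ((10:ℝ)^n * x)
  have hp : (0:ℝ) < 10 ^ n := by positivity
  have : (10:ℝ)^n * x = (⌊(10:ℝ)^n * x⌋ : ℝ) + 1 := by
    field_simp at hsplit
    rw [mul_comm ((10:ℝ)^n) x]
    exact hsplit
  linarith

lemma good_dig1 {x : ℝ} (hx0 : 0 ≤ x) (hx1 : x < 1) : Good (dig1 x) :=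
  ⟨dig1_nonneg x, dig1_le9 x, dig1_not9 hx0 hx1⟩

/-- The constant-9 sequence. -/
def nine9 : ℕ → ℤ := fun _ => 9

lemma val_nine9 : val nine9 = 1 := by
  have h := nine_tail 0
  norm_num at h
  rw [val]
  rw [show (fun k : ℕ => ((nine9 k : ℤ) : ℝ) / 10 ^ (k + 1)) = fun k : ℕ => (9:ℝ)/10^(k+1) by
    funext k; norm_num [nine9]]
  exact h

/-- Interleaving of two digit sequences. -/
def il (a b : ℕ → ℤ) : ℕ → ℤ := fun k => if k % 2 = 0 then a (k / 2) else b (k / 2)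

lemma il_even (a b : ℕ → ℤ) (k : ℕ) : il a b (2 * k) = a k := by
  simp [il, Nat.mul_mod_right, Nat.mul_div_cancel_left k (by norm_num : 0 < 2)]

lemma il_odd (a b : ℕ → ℤ) (k : ℕ) : il a b (2 * k + 1) = b k := by
  have h1 : (2 * k + 1) % 2 = 1 := by omega
  have h2 : (2 * k + 1) / 2 = k := by omega
  simp [il, h1, h2]

lemma good_il_left {a b : ℕ → ℤ} (h0a : ∀ k, 0 ≤ a k) (h9a : ∀ k, a k ≤ 9)
    (h0b : ∀ k, 0 ≤ b k) (h9b : ∀ k, b k ≤ 9)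
    (na : ∀ n, ∃ k, n ≤ k ∧ a k < 9) : Good (il a b) := by
  refine ⟨fun k => ?_, fun k => ?_, fun n => ?_⟩
  · rw [il]; split <;> [exact h0a _; exact h0b _]
  · rw [il]; split <;> [exact h9a _; exact h9b _]
  · obtain ⟨k, hk, hk9⟩ := na n
    exact ⟨2 * k, by omega, by rw [il_even]; exact hk9⟩

lemma good_il_right {a b : ℕ → ℤ} (h0a : ∀ k, 0 ≤ a k) (h9a : ∀ k, a k ≤ 9)
    (h0b : ∀ k, 0 ≤ b k) (h9b : ∀ k, b k ≤ 9)
    (nb : ∀ n, ∃ k, n ≤ k ∧ b k < 9) : Good (il a b) := by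
  refine ⟨fun k => ?_, fun k => ?_, fun n => ?_⟩
  · rw [il]; split <;> [exact h0a _; exact h0b _]
  · rw [il]; split <;> [exact h9a _; exact h9b _]
  · obtain ⟨k, hk, hk9⟩ := nb n
    exact ⟨2 * k + 1, by omega, by rw [il_odd]; exact hk9⟩

lemma val_il {a b : ℕ → ℤ} (h0a : ∀ k, 0 ≤ a k) (h9a : ∀ k, a k ≤ 9)
    (h0b : ∀ k, 0 ≤ b k) (h9b : ∀ k, b k ≤ 9) :
    val (il a b) = (∑' k : ℕ, (a k : ℝ) / 10 ^ (2 * (k + 1) - 1)) +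
      ∑' k : ℕ, (b k : ℝ) / 10 ^ (2 * (k + 1)) := by
  have hsa : Summable (fun k : ℕ => (il a b (2 * k) : ℝ) / 10 ^ (2 * k + 1)) := by
    exact summable_aux (fun k => il a b (2 * k))
      (fun k => by show 0 ≤ il a b (2 * k); rw [il_even]; exact h0a _)
      (fun k => by show il a b (2 * k) ≤ 9; rw [il_even]; exact h9a _) (fun k => 2 * k + 1)
      (fun k => by show k ≤ 2 * k + 1; omega)
  have hsb : Summable (fun k : ℕ => (il a b (2 * k + 1) : ℝ) / 10 ^ (2 * k + 1 + 1)) := by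
    exact summable_aux (fun k => il a b (2 * k + 1))
      (fun k => by show 0 ≤ il a b (2 * k + 1); rw [il_odd]; exact h0b _)
      (fun k => by show il a b (2 * k + 1) ≤ 9; rw [il_odd]; exact h9b _) (fun k => 2 * k + 1 + 1)
      (fun k => by show k ≤ 2 * k + 1 + 1; omega)
  have key := tsum_even_add_odd (f := fun k : ℕ => (il a b k : ℝ) / 10 ^ (k + 1)) hsa hsb
  rw [val, ← key]
  congr 1
  · apply tsum_congr
    intro k
    beta_reduce
    rw [il_even, show 2 * (k + 1) - 1 = 2 * k + 1 by omega]
  · apply tsum_congr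
    intro k
    beta_reduce
    rw [il_odd, show 2 * (k + 1) = 2 * k + 1 + 1 by omega]

/-- Recovery maps. -/
noncomputable def XR (z : ℝ) : ℝ := ∑' k : ℕ, (digit (2 * k + 1) z : ℝ) / 10 ^ (k + 1)
noncomputable def YR (z : ℝ) : ℝ := ∑' k : ℕ, (digit (2 * k + 2) z : ℝ) / 10 ^ (k + 1)

lemma XR_val_il {a b : ℕ → ℤ} (h : Good (il a b)) : XR (val (il a b)) = val a := by
  have h1 : ∀ k : ℕ, digit (2 * k + 1) (val (il a b)) = a k := by
    intro k
    rw [show 2 * k + 1 = (2 * k) + 1 from rfl, digit_val _ h (2 * k), il_even]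
  rw [XR]
  simp_rw [h1]
  rfl

lemma YR_val_il {a b : ℕ → ℤ} (h : Good (il a b)) : YR (val (il a b)) = val b := by
  have h1 : ∀ k : ℕ, digit (2 * k + 2) (val (il a b)) = b k := by
    intro k
    rw [show 2 * k + 2 = (2 * k + 1) + 1 from rfl, digit_val _ h (2 * k + 1), il_odd]
  rw [YR]
  simp_rw [h1]
  rfl

end CantorAux


/-- Cantor's interleaving map
`C(x,y) = ∑_{k≥1} d_k(x)/10^{2k-1} + ∑_{k≥1} d_k(y)/10^{2k}`. -/
noncomputable def cantorC (x y : ℝ) : ℝ :=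
  (∑' k : ℕ, (digit (k + 1) x : ℝ) / 10 ^ (2 * (k + 1) - 1)) +
    ∑' k : ℕ, (digit (k + 1) y : ℝ) / 10 ^ (2 * (k + 1))

/-- The extension `f : [0,1]² → [0,1]` of Cantor's interleaving map:
`f(x,y) = C(x,y)` for `x, y ∈ [0,1)`; `f(1,y) = 0.9y₁9y₂9y₃⋯` for `y ∈ [0,1)`;
`f(x,1) = 0.x₁9x₂9x₃9⋯` for `x ∈ [0,1)`; and `f(1,1) = 1`. -/
noncomputable def cantorF (x y : ℝ) : ℝ :=
  if x < 1 ∧ y < 1 then cantorC x y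
  else if x = 1 ∧ y < 1 then
    (∑' k : ℕ, (9 : ℝ) / 10 ^ (2 * (k + 1) - 1)) +
      ∑' k : ℕ, (digit (k + 1) y : ℝ) / 10 ^ (2 * (k + 1))
  else if x < 1 ∧ y = 1 then
    (∑' k : ℕ, (digit (k + 1) x : ℝ) / 10 ^ (2 * (k + 1) - 1)) +
      ∑' k : ℕ, (9 : ℝ) / 10 ^ (2 * (k + 1))
  else 1

namespace CantorAux

lemma nine9_nonneg : ∀ k : ℕ, 0 ≤ nine9 k := fun _ => by norm_num [nine9]
lemma nine9_le9 : ∀ k : ℕ, nine9 k ≤ 9 := fun _ => le_refl _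

/-- Case 1: `x, y < 1`. -/
lemma cantorF_eq1 {x y : ℝ} (hx1 : x < 1) (hy1 : y < 1) :
    cantorF x y = val (il (dig1 x) (dig1 y)) := by
  rw [cantorF, if_pos ⟨hx1, hy1⟩, cantorC,
    val_il (dig1_nonneg x) (dig1_le9 x) (dig1_nonneg y) (dig1_le9 y)]
  rfl

/-- Case 2: `x = 1`, `y < 1`. -/
lemma cantorF_eq2 {y : ℝ} (hy1 : y < 1) :
    cantorF 1 y = val (il nine9 (dig1 y)) := by
  rw [cantorF, if_neg (by simp), if_pos ⟨rfl, hy1⟩,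
    val_il nine9_nonneg nine9_le9 (dig1_nonneg y) (dig1_le9 y)]
  congr 1

/-- Case 3: `x < 1`, `y = 1`. -/
lemma cantorF_eq3 {x : ℝ} (hx1 : x < 1) :
    cantorF x 1 = val (il (dig1 x) nine9) := by
  rw [cantorF, if_neg (by simp), if_neg (by simp [hx1.ne]), if_pos ⟨hx1, rfl⟩,
    val_il (dig1_nonneg x) (dig1_le9 x) nine9_nonneg nine9_le9]
  congr 1

/-- Case 4: `x = y = 1`. -/
lemma cantorF_eq4 : cantorF 1 1 = 1 := by
  rw [cantorF, if_neg (by simp), if_neg (by simp), if_neg (by simp)]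

/-- The inverse/recovery map. -/
noncomputable def RR (z : ℝ) : ℝ × ℝ := if z = 1 then (1, 1) else (XR z, YR z)

lemma good1 {x y : ℝ} (hx0 : 0 ≤ x) (hx1 : x < 1) : Good (il (dig1 x) (dig1 y)) :=
  good_il_left (dig1_nonneg x) (dig1_le9 x) (dig1_nonneg y) (dig1_le9 y) (dig1_not9 hx0 hx1)

lemma good2 {y : ℝ} (hy0 : 0 ≤ y) (hy1 : y < 1) : Good (il nine9 (dig1 y)) :=
  good_il_right nine9_nonneg nine9_le9 (dig1_nonneg y) (dig1_le9 y) (dig1_not9 hy0 hy1)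

lemma good3 {x : ℝ} (hx0 : 0 ≤ x) (hx1 : x < 1) : Good (il (dig1 x) nine9) :=
  good_il_left (dig1_nonneg x) (dig1_le9 x) nine9_nonneg nine9_le9 (dig1_not9 hx0 hx1)

lemma cantorF_mem {x y : ℝ} (hx : x ∈ Set.Icc (0:ℝ) 1) (hy : y ∈ Set.Icc (0:ℝ) 1) :
    cantorF x y ∈ Set.Icc (0:ℝ) 1 := by
  rcases lt_or_eq_of_le hx.2 with hx1 | hx1 <;> rcases lt_or_eq_of_le hy.2 with hy1 | hy1
  · rw [cantorF_eq1 hx1 hy1]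
    exact ⟨val_nonneg (good1 hx.1 hx1 (y := y)).nonneg, (val_lt_one _ (good1 hx.1 hx1)).le⟩
  · subst hy1
    rw [cantorF_eq3 hx1]
    exact ⟨val_nonneg (good3 hx.1 hx1).nonneg, (val_lt_one _ (good3 hx.1 hx1)).le⟩
  · subst hx1
    rw [cantorF_eq2 hy1]
    exact ⟨val_nonneg (good2 hy.1 hy1).nonneg, (val_lt_one _ (good2 hy.1 hy1)).le⟩
  · subst hx1; subst hy1
    rw [cantorF_eq4]
    exact ⟨by norm_num, le_refl _⟩

lemma RR_cantorF {x y : ℝ} (hx : x ∈ Set.Icc (0:ℝ) 1) (hy : y ∈ Set.Icc (0:ℝ) 1) :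
    RR (cantorF x y) = (x, y) := by
  rcases lt_or_eq_of_le hx.2 with hx1 | hx1 <;> rcases lt_or_eq_of_le hy.2 with hy1 | hy1
  · have hg : Good (il (dig1 x) (dig1 y)) := good1 hx.1 hx1
    rw [cantorF_eq1 hx1 hy1, RR, if_neg (val_lt_one _ hg).ne, XR_val_il hg, YR_val_il hg,
      val_dig1 hx.1 hx1, val_dig1 hy.1 hy1]
  · subst hy1
    have hg : Good (il (dig1 x) nine9) := good3 hx.1 hx1
    rw [cantorF_eq3 hx1, RR, if_neg (val_lt_one _ hg).ne, XR_val_il hg, YR_val_il hg,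
      val_dig1 hx.1 hx1, val_nine9]
  · subst hx1
    have hg : Good (il nine9 (dig1 y)) := good2 hy.1 hy1
    rw [cantorF_eq2 hy1, RR, if_neg (val_lt_one _ hg).ne, XR_val_il hg, YR_val_il hg,
      val_dig1 hy.1 hy1, val_nine9]
  · subst hx1; subst hy1
    rw [cantorF_eq4, RR, if_pos rfl]

lemma cantorF_injOn :
    Set.InjOn (fun p : ℝ × ℝ => cantorF p.1 p.2) (Set.Icc 0 1 ×ˢ Set.Icc 0 1) := by
  intro p hp q hq h
  rw [Set.mem_prod] at hp hq
  have h1 : RR (cantorF p.1 p.2) = (p.1, p.2) := RR_cantorF hp.1 hp.2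
  have h2 : RR (cantorF q.1 q.2) = (q.1, q.2) := RR_cantorF hq.1 hq.2
  have : (p.1, p.2) = (q.1, q.2) := by
    rw [← h1, ← h2]
    simp only at h
    rw [h]
  simpa using this

end CantorAux


/-- The Schröder–Bernstein sequence of subsets of `[0,1]²` for the injections
`f` and `g(t) = (t,0)`: `A₀ = [0,1]² \ g([0,1])` and `A_{n+1} = g(f(A_n))`. -/
noncomputable def SBA : ℕ → Set (ℝ × ℝ)
  | 0 => (Icc 0 1 ×ˢ Icc 0 1) \ ((fun t : ℝ => (t, (0 : ℝ))) '' Icc 0 1)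
  | n + 1 => (fun t : ℝ => (t, (0 : ℝ))) '' ((fun p : ℝ × ℝ => cantorF p.1 p.2) '' SBA n)

/-- The corresponding sequence of subsets of `[0,1]`: `B_n = f(A_n)`. -/
noncomputable def SBB (n : ℕ) : Set ℝ := (fun p : ℝ × ℝ => cantorF p.1 p.2) '' SBA n

open Classical in
/-- The bijection `f* : [0,1]² → [0,1]`: `f*(x,y) = f(x,y)` if `(x,y) ∈ ⋃ n, A_n`,
and `f*(x,y) = x` otherwise. -/
noncomputable def fstar (p : ℝ × ℝ) : ℝ :=
  if p ∈ ⋃ n, SBA n then cantorF p.1 p.2 else p.1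

namespace CantorAux

lemma SBA_subset (n : ℕ) : SBA n ⊆ Icc 0 1 ×ˢ Icc 0 1 := by
  induction n with
  | zero => exact diff_subset
  | succ n ih =>
    rintro _ ⟨t, ⟨p, hp, rfl⟩, rfl⟩
    have hp' := ih hp
    rw [mem_prod] at hp'
    exact mem_prod.mpr ⟨cantorF_mem hp'.1 hp'.2, by norm_num⟩

lemma snd_zero_of_not_A {q : ℝ × ℝ} (hq : q ∈ Icc 0 1 ×ˢ Icc 0 1)
    (hqA : q ∉ ⋃ n, SBA n) : q.2 = 0 := by
  have h0 : q ∉ SBA 0 := fun h => hqA (mem_iUnion.mpr ⟨0, h⟩)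
  rw [show SBA 0 = (Icc 0 1 ×ˢ Icc 0 1) \ ((fun t : ℝ => (t, (0 : ℝ))) '' Icc 0 1) from rfl,
    mem_diff] at h0
  push_neg at h0
  obtain ⟨t, _, ht⟩ := h0 hq
  rw [← ht]

lemma mem_A_of_g_F {p : ℝ × ℝ} (hpA : p ∈ ⋃ n, SBA n) :
    (cantorF p.1 p.2, (0:ℝ)) ∈ ⋃ n, SBA n := by
  obtain ⟨n, hn⟩ := mem_iUnion.mp hpA
  exact mem_iUnion.mpr ⟨n + 1, ⟨cantorF p.1 p.2, ⟨p, hn, rfl⟩, rfl⟩⟩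

end CantorAux


/-- **Main Proposition.** The function `f*` is a bijection from `[0,1]²` to `[0,1]`. -/
theorem fstar_bijOn : Set.BijOn fstar (Icc 0 1 ×ˢ Icc 0 1) (Icc (0 : ℝ) 1) := by
  classical
  refine ⟨?_, ?_, ?_⟩
  · -- MapsTo
    intro p hp
    have hp' := Set.mem_prod.mp hp
    rw [fstar]
    split_ifs with h
    · exact CantorAux.cantorF_mem hp'.1 hp'.2
    · exact hp'.1
  · -- InjOn
    intro p hp q hq h
    rw [fstar, fstar] at h
    by_cases hpA : p ∈ ⋃ n, SBA n <;> by_cases hqA : q ∈ ⋃ n, SBA n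
    · rw [if_pos hpA, if_pos hqA] at h
      exact CantorAux.cantorF_injOn hp hq h
    · rw [if_pos hpA, if_neg hqA] at h
      exfalso
      apply hqA
      have hq2 : q.2 = 0 := CantorAux.snd_zero_of_not_A hq hqA
      have : q = (cantorF p.1 p.2, (0:ℝ)) := Prod.ext h.symm hq2
      rw [this]
      exact CantorAux.mem_A_of_g_F hpA
    · rw [if_neg hpA, if_pos hqA] at h
      exfalso
      apply hpA
      have hp2 : p.2 = 0 := CantorAux.snd_zero_of_not_A hp hpA
      have : p = (cantorF q.1 q.2, (0:ℝ)) := Prod.ext h hp2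
      rw [this]
      exact CantorAux.mem_A_of_g_F hqA
    · rw [if_neg hpA, if_neg hqA] at h
      have hp2 : p.2 = 0 := CantorAux.snd_zero_of_not_A hp hpA
      have hq2 : q.2 = 0 := CantorAux.snd_zero_of_not_A hq hqA
      exact Prod.ext h (hp2.trans hq2.symm)
  · -- SurjOn
    intro z hz
    by_cases hB : ∃ n, z ∈ SBB n
    · obtain ⟨n, p, hpA, hpz⟩ := hB
      refine ⟨p, CantorAux.SBA_subset n hpA, ?_⟩
      rw [fstar, if_pos (Set.mem_iUnion.mpr ⟨n, hpA⟩)]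
      exact hpz
    · refine ⟨(z, 0), Set.mem_prod.mpr ⟨hz, by norm_num⟩, ?_⟩
      have hnA : (z, (0:ℝ)) ∉ ⋃ n, SBA n := by
        intro hmem
        obtain ⟨n, hn⟩ := Set.mem_iUnion.mp hmem
        match n with
        | 0 =>
          exact hn.2 ⟨z, hz, rfl⟩
        | n + 1 =>
          obtain ⟨t, ht, heq⟩ := hn
          apply hB
          refine ⟨n, ?_⟩
          have : t = z := congrArg Prod.fst heq
          rw [← this]
          exact ht
      rw [fstar, if_neg hnA]
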